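/- Let n ≥ 1, let f : ℝⁿ → ℝ, and let f̃ be a smoothing function of f. If x* ∈ S^{n−1} is a local minimizer of f relative to S^{n−1}, then x* is a stationary point of f associated with f̃ on the sphere: liminf_{x → x*, x ∈ S^{n−1}, μ → 0⁺} ‖Proj_x(∇_x f̃(x, μ))‖ = 0; equivalently, there exist sequences x_k ∈ S^{n−1} with x_k → x* and μ_k → 0⁺ such that the Riemannian gradients Proj_{x_k}(∇_x f̃(x_k, μ_k)) = ∇_x f̃(x_k, μ_k) − ⟨∇_x f̃(x_k, μ_k), x_k⟩ x_k converge to 0. -/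

import Mathlib

open Filter Topology

/-- The orthogonal projection onto the tangent space of the unit sphere at `x`:
`Proj_x(v) = v − ⟨v, x⟩x`. -/
noncomputable def sphereProj {n : ℕ} (x v : EuclideanSpace ℝ (Fin n)) :
    EuclideanSpace ℝ (Fin n) :=
  v - (inner ℝ v x : ℝ) • x

/-- `ft` is a smoothing function of `f : ℝⁿ → ℝ` with constant `κ > 0` and function `ω`. -/
def IsSmoothingFun {n : ℕ} (f : EuclideanSpace ℝ (Fin n) → ℝ)
    (ft : EuclideanSpace ℝ (Fin n) → ℝ → ℝ) (κ : ℝ) (ω : ℝ → ℝ) : Prop :=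
  0 < κ ∧ (∀ μ > (0 : ℝ), ContDiff ℝ 1 (fun x => ft x μ)) ∧
    (∀ μ > (0 : ℝ), 0 < ω μ) ∧ Filter.Tendsto ω (nhdsWithin 0 (Set.Ioi 0)) (nhds 0) ∧
    ∀ x, ∀ μ > (0 : ℝ), |ft x μ - f x| ≤ κ * ω μ

lemma sphereProj_sub {n : ℕ} (x v w : EuclideanSpace ℝ (Fin n)) :
    sphereProj x (v - w) = sphereProj x v - sphereProj x w := by
  simp only [sphereProj, inner_sub_left, sub_smul]
  abel

lemma sphereProj_smul_self {n : ℕ} (x : EuclideanSpace ℝ (Fin n)) (hx : ‖x‖ = 1) (c : ℝ) :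
    sphereProj x (c • x) = 0 := by
  simp only [sphereProj, real_inner_smul_left]
  rw [real_inner_self_eq_norm_sq, hx]
  simp

lemma norm_sphereProj_le {n : ℕ} (x v : EuclideanSpace ℝ (Fin n)) (hx : ‖x‖ = 1) :
    ‖sphereProj x v‖ ≤ 2 * ‖v‖ := by
  have h1 : ‖sphereProj x v‖ ≤ ‖v‖ + ‖(inner ℝ v x : ℝ) • x‖ := norm_sub_le _ _
  rw [norm_smul, Real.norm_eq_abs, hx, mul_one] at h1
  have h3 : |(inner ℝ v x : ℝ)| ≤ ‖v‖ := by
    have := abs_real_inner_le_norm v x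
    rwa [hx, mul_one] at this
  linarith

/-- Lagrange multiplier on the sphere: at a local minimum of a `C¹` function on the unit
sphere, the gradient is a scalar multiple of the point. -/
lemma lagrange_sphere {n : ℕ} (φ : EuclideanSpace ℝ (Fin n) → ℝ) (hφ : ContDiff ℝ 1 φ)
    (x : EuclideanSpace ℝ (Fin n)) (hx : ‖x‖ = 1)
    (hmin : IsLocalMinOn φ {y : EuclideanSpace ℝ (Fin n) | ‖y‖ = 1} x) :
    ∃ c : ℝ, gradient φ x = c • x := by
  have key : ∀ t : ℝ, 0 ≤ t → (t ^ 2 = 1 ↔ t = 1) := by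
    intro t ht
    constructor
    · intro h
      have h' : (t - 1) * (t + 1) = 0 := by nlinarith
      rcases mul_eq_zero.1 h' with h'' | h'' <;> [linarith; linarith]
    · rintro rfl; norm_num
  have hset : {y : EuclideanSpace ℝ (Fin n) | (fun z => ‖z‖ ^ 2) y = (fun z => ‖z‖ ^ 2) x}
      = {y : EuclideanSpace ℝ (Fin n) | ‖y‖ = 1} := by
    ext y
    simp only [Set.mem_setOf_eq, hx, one_pow]
    exact key _ (norm_nonneg y)
  have hextr : IsLocalExtrOn φ
      {y : EuclideanSpace ℝ (Fin n) | (fun z => ‖z‖ ^ 2) y = (fun z => ‖z‖ ^ 2) x} x := by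
    rw [hset]; exact Or.inl hmin
  have hsq : HasStrictFDerivAt (fun z : EuclideanSpace ℝ (Fin n) => ‖z‖ ^ 2)
      (2 • (innerSL ℝ x)) x := hasStrictFDerivAt_norm_sq x
  have hφ' : HasStrictFDerivAt φ (fderiv ℝ φ x) x :=
    (hφ.contDiffAt).hasStrictFDerivAt one_ne_zero
  obtain ⟨a, b, hab, heq⟩ := hextr.exists_multipliers_of_hasStrictFDerivAt_1d hsq hφ'
  have happ : ∀ v, a * (2 * (inner ℝ x v : ℝ)) + b * (fderiv ℝ φ x v) = 0 := by
    intro v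
    have h := DFunLike.congr_fun heq v
    simp only [ContinuousLinearMap.add_apply, ContinuousLinearMap.smul_apply,
      ContinuousLinearMap.zero_apply, smul_eq_mul, two_smul,
      ContinuousLinearMap.add_apply, innerSL_apply_apply] at h
    linarith
  have hb : b ≠ 0 := by
    intro hb0
    have h0 := happ x
    rw [hb0] at h0
    have hxx : (inner ℝ x x : ℝ) = 1 := by
      rw [real_inner_self_eq_norm_sq, hx]; norm_num
    rw [hxx] at h0
    have ha : a = 0 := by linarith
    exact hab (by simp [ha, hb0, Prod.ext_iff])
  refine ⟨-(2 * a) / b, ?_⟩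
  have hfd : fderiv ℝ φ x = InnerProductSpace.toDual ℝ (EuclideanSpace ℝ (Fin n))
      ((-(2 * a) / b) • x) := by
    ext v
    rw [InnerProductSpace.toDual_apply_apply]
    have hin : (inner ℝ ((-(2 * a) / b) • x) v : ℝ) = (-(2 * a) / b) * (inner ℝ x v : ℝ) :=
      real_inner_smul_left x v _
    rw [hin, div_mul_eq_mul_div, eq_div_iff hb]
    linarith [happ v]
  show (InnerProductSpace.toDual ℝ (EuclideanSpace ℝ (Fin n))).symm (fderiv ℝ φ x) = _
  rw [hfd, LinearIsometryEquiv.symm_apply_apply]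

lemma hasGradientAt_norm_sq_sub {n : ℕ} (xs x : EuclideanSpace ℝ (Fin n)) :
    HasGradientAt (fun y => ‖y - xs‖ ^ 2) ((2 : ℝ) • (x - xs)) x := by
  have hF : HasFDerivAt (fun y : EuclideanSpace ℝ (Fin n) => ‖y - xs‖ ^ 2)
      ((2 • (innerSL ℝ (x - xs))).comp (ContinuousLinearMap.id ℝ (EuclideanSpace ℝ (Fin n)))) x := by
    have houter := (hasStrictFDerivAt_norm_sq (x - xs)).hasFDerivAt
    have hinner : HasFDerivAt (fun y : EuclideanSpace ℝ (Fin n) => y - xs)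
        (ContinuousLinearMap.id ℝ (EuclideanSpace ℝ (Fin n))) x := by
      simpa using (hasFDerivAt_id x).sub_const xs
    exact houter.comp x hinner
  rw [hasGradientAt_iff_hasFDerivAt]
  refine hF.congr_fderiv (Eq.symm ?_)
  ext v
  rw [InnerProductSpace.toDual_apply_apply]
  have hin : (inner ℝ ((2 : ℝ) • (x - xs)) v : ℝ) = 2 * (inner ℝ (x - xs) v : ℝ) :=
    real_inner_smul_left (x - xs) v 2
  rw [hin]
  simp only [ContinuousLinearMap.coe_comp', Function.comp_apply,
    ContinuousLinearMap.coe_id', id_eq, two_smul, ContinuousLinearMap.add_apply, innerSL_apply_apply]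
  ring

/-- If `x* ∈ S^{n−1}` is a local minimizer of `f` relative to the sphere and `ft` is a
smoothing function of `f`, then `x*` is a stationary point of `f` associated with `ft`
on the sphere: there exist sequences `x_k ∈ S^{n−1}` with `x_k → x*` and `μ_k → 0⁺`
such that the Riemannian gradients `Proj_{x_k}(∇_x ft(x_k, μ_k))` converge to `0`. -/
theorem local_min_is_smoothing_stationary_on_sphere (n : ℕ) (hn : 1 ≤ n)
    (f : EuclideanSpace ℝ (Fin n) → ℝ) (ft : EuclideanSpace ℝ (Fin n) → ℝ → ℝ)
    (κ : ℝ) (ω : ℝ → ℝ) (hsm : IsSmoothingFun f ft κ ω)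
    (xs : EuclideanSpace ℝ (Fin n)) (hxs : ‖xs‖ = 1)
    (hmin : ∃ ε > (0 : ℝ), ∀ y, ‖y‖ = 1 → ‖y - xs‖ < ε → f xs ≤ f y) :
    ∃ (x : ℕ → EuclideanSpace ℝ (Fin n)) (μ : ℕ → ℝ),
      (∀ k, ‖x k‖ = 1) ∧ Filter.Tendsto x Filter.atTop (nhds xs) ∧
      (∀ k, 0 < μ k) ∧ Filter.Tendsto μ Filter.atTop (nhds 0) ∧
      Filter.Tendsto (fun k => sphereProj (x k) (gradient (fun y => ft y (μ k)) (x k)))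
        Filter.atTop (nhds 0) := by
  obtain ⟨ε, hε, hεmin⟩ := hmin
  obtain ⟨hκ, hC1, hωpos, hωto, hbound⟩ := hsm
  have claim : ∀ k : ℕ, ∃ (x : EuclideanSpace ℝ (Fin n)) (μ : ℝ),
      ‖x‖ = 1 ∧ 0 < μ ∧ μ < 1 / (k + 1 : ℝ) ∧ ‖x - xs‖ < 1 / (k + 1 : ℝ) ∧
      ‖sphereProj x (gradient (fun y => ft y μ) x)‖ ≤ 4 / (k + 1 : ℝ) := by
    intro k
    have hk1 : (0 : ℝ) < 1 / (k + 1 : ℝ) := by positivity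
    set δ : ℝ := min ((ε / 4) ^ 2) ((1 / (k + 1 : ℝ)) ^ 2) with hδdef
    have hδ : 0 < δ := lt_min (by positivity) (by positivity)
    -- choose μ
    have h1 : ∀ᶠ μ in nhdsWithin (0 : ℝ) (Set.Ioi 0), ω μ < δ / (2 * κ) :=
      hωto.eventually_lt_const (by positivity)
    have h2 : ∀ᶠ μ in nhdsWithin (0 : ℝ) (Set.Ioi 0), μ ∈ Set.Ioo (0 : ℝ) (1 / (k + 1 : ℝ)) :=
      Filter.eventually_iff.2 (Ioo_mem_nhdsGT_of_mem ⟨le_refl 0, hk1⟩)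
    obtain ⟨μ, hμω, hμ0, hμk⟩ := (h1.and h2).exists
    have hμpos : 0 < μ := hμ0
    have hωμ : 2 * κ * ω μ < δ := by
      calc 2 * κ * ω μ < 2 * κ * (δ / (2 * κ)) := by
            apply mul_lt_mul_of_pos_left hμω (by positivity)
        _ = δ := by field_simp
    -- compact minimization
    set K : Set (EuclideanSpace ℝ (Fin n)) :=
      {y | ‖y‖ = 1} ∩ Metric.closedBall xs (ε / 2) with hKdef
    have hKclosed : IsClosed K :=
      (isClosed_eq continuous_norm continuous_const).inter Metric.isClosed_closedBall
    have hKcomp : IsCompact K :=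
      (isCompact_closedBall xs (ε / 2)).of_isClosed_subset hKclosed Set.inter_subset_right
    have hxsK : xs ∈ K := ⟨hxs, by simp [Metric.mem_closedBall]; positivity⟩
    set Φ : EuclideanSpace ℝ (Fin n) → ℝ := fun y => ft y μ + ‖y - xs‖ ^ 2 with hΦdef
    have hΦcd : ContDiff ℝ 1 Φ := by
      apply (hC1 μ hμpos).add
      exact (contDiff_norm_sq ℝ).comp (contDiff_id.sub contDiff_const)
    obtain ⟨x, hxK, hxmin⟩ := hKcomp.exists_isMinOn ⟨xs, hxsK⟩ hΦcd.continuous.continuousOn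
    have hxsphere : ‖x‖ = 1 := hxK.1
    have hxball : ‖x - xs‖ ≤ ε / 2 := by
      have := hxK.2
      rw [Metric.mem_closedBall, dist_eq_norm] at this
      exact this
    -- key estimate
    have hΦle : Φ x ≤ Φ xs := hxmin hxsK
    have hfle : f xs ≤ f x := hεmin x hxsphere (lt_of_le_of_lt hxball (by linarith))
    have hb1 := abs_le.1 (hbound x μ hμpos)
    have hb2 := abs_le.1 (hbound xs μ hμpos)
    have hsqlt : ‖x - xs‖ ^ 2 < δ := by
      have h0 : ft x μ + ‖x - xs‖ ^ 2 ≤ ft xs μ := by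
        have : ‖xs - xs‖ ^ 2 = 0 := by simp
        simpa [hΦdef, this] using hΦle
      nlinarith [hb1.1, hb1.2, hb2.1, hb2.2]
    have hxlt1 : ‖x - xs‖ < 1 / (k + 1 : ℝ) := by
      have h := lt_of_lt_of_le hsqlt (min_le_right _ _)
      nlinarith [norm_nonneg (x - xs)]
    have hxltε : ‖x - xs‖ < ε / 4 := by
      have h := lt_of_lt_of_le hsqlt (min_le_left _ _)
      nlinarith [norm_nonneg (x - xs)]
    -- x is a local minimum of Φ on the sphere
    have hloc : IsLocalMinOn Φ {y : EuclideanSpace ℝ (Fin n) | ‖y‖ = 1} x := by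
      have hball : Metric.closedBall xs (ε / 2) ∈ nhds x := by
        apply Metric.closedBall_mem_nhds_of_mem
        rw [Metric.mem_ball, dist_eq_norm]
        linarith
      have hev1 : ∀ᶠ y in nhdsWithin x {y : EuclideanSpace ℝ (Fin n) | ‖y‖ = 1},
          y ∈ Metric.closedBall xs (ε / 2) := mem_nhdsWithin_of_mem_nhds hball
      have hev2 : ∀ᶠ y in nhdsWithin x {y : EuclideanSpace ℝ (Fin n) | ‖y‖ = 1},
          y ∈ {y : EuclideanSpace ℝ (Fin n) | ‖y‖ = 1} := self_mem_nhdsWithin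
      filter_upwards [hev1, hev2] with y hy1 hy2
      exact hxmin ⟨hy2, hy1⟩
    obtain ⟨c, hc⟩ := lagrange_sphere Φ hΦcd x hxsphere hloc
    -- gradient decomposition
    set g : EuclideanSpace ℝ (Fin n) := gradient (fun y => ft y μ) x with hgdef
    have hft : HasGradientAt (fun y => ft y μ) g x :=
      (((hC1 μ hμpos).differentiable one_ne_zero).differentiableAt).hasGradientAt
    have hsqg : HasGradientAt (fun y => ‖y - xs‖ ^ 2) ((2 : ℝ) • (x - xs)) x :=
      hasGradientAt_norm_sq_sub xs x
    have hΦg : HasGradientAt Φ (g + (2 : ℝ) • (x - xs)) x := by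
      rw [hasGradientAt_iff_hasFDerivAt, map_add]
      exact HasFDerivAt.add (hasGradientAt_iff_hasFDerivAt.1 hft)
        (hasGradientAt_iff_hasFDerivAt.1 hsqg)
    have hgrad : g + (2 : ℝ) • (x - xs) = c • x := by
      rw [← hΦg.gradient]; exact hc
    have hgeq : g = c • x - (2 : ℝ) • (x - xs) := by
      rw [← hgrad]; abel
    have hproj : sphereProj x g = - sphereProj x ((2 : ℝ) • (x - xs)) := by
      rw [hgeq, sphereProj_sub, sphereProj_smul_self x hxsphere c]
      abel
    have hnorm : ‖sphereProj x g‖ ≤ 4 / (k + 1 : ℝ) := by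
      rw [hproj, norm_neg]
      calc ‖sphereProj x ((2 : ℝ) • (x - xs))‖ ≤ 2 * ‖(2 : ℝ) • (x - xs)‖ :=
            norm_sphereProj_le x _ hxsphere
        _ = 4 * ‖x - xs‖ := by rw [norm_smul]; simp; ring
        _ ≤ 4 * (1 / (k + 1 : ℝ)) := by linarith
        _ = 4 / (k + 1 : ℝ) := by ring
    exact ⟨x, μ, hxsphere, hμpos, hμk, hxlt1, hnorm⟩
  choose x μ h1 h2 h3 h4 h5 using claim
  have htend : Filter.Tendsto (fun k : ℕ => 1 / (k + 1 : ℝ)) Filter.atTop (nhds 0) :=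
    tendsto_one_div_add_atTop_nhds_zero_nat
  refine ⟨x, μ, h1, ?_, h2, ?_, ?_⟩
  · rw [tendsto_iff_norm_sub_tendsto_zero]
    exact squeeze_zero (fun k => norm_nonneg _) (fun k => (h4 k).le) htend
  · exact squeeze_zero (fun k => (h2 k).le) (fun k => (h3 k).le) htend
  · rw [tendsto_zero_iff_norm_tendsto_zero]
    refine squeeze_zero (fun k => norm_nonneg _) (fun k => h5 k) ?_
    have : (fun k : ℕ => 4 / (k + 1 : ℝ)) = fun k : ℕ => 4 * (1 / (k + 1 : ℝ)) := by
      funext k; ring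
    rw [this]
    simpa using htend.const_mul (4 : ℝ)
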